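/- Let G be a d-regular graph on n vertices. Then G contains a full subgraph on ⌊n/2⌋ or ⌊n/2⌋ + 1 vertices. -/

import Mathlib

open scoped Classical

/-- Number of neighbours of `v` inside `S`. -/
noncomputable def degIn {V : Type*} (G : SimpleGraph V) (S : Finset V) (v : V) : ℕ :=
  (S.filter fun u => G.Adj v u).card

/-- `S` induces a full subgraph for density `p`: every vertex of `S` has
at least `p * (|S| - 1)` neighbours inside `S`. -/
def IsFull {V : Type*} (G : SimpleGraph V) (p : ℝ) (S : Finset V) : Prop :=
  ∀ v ∈ S, p * ((S.card : ℝ) - 1) ≤ (degIn G S v : ℝ)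
/-- The density of `G`: `e(G) / C(n,2)`. -/
noncomputable def density {V : Type*} [Fintype V] (G : SimpleGraph V) : ℝ :=
  (G.edgeFinset.card : ℝ) / ((Fintype.card V).choose 2 : ℕ)

open Finset

/-- Twice the number of edges inside `S`. -/
noncomputable def e2 {V : Type*} (G : SimpleGraph V) (S : Finset V) : ℕ :=
  ∑ v ∈ S, degIn G S v

lemma degIn_insert_self {V : Type*} (G : SimpleGraph V) (S : Finset V) (u : V) :
    degIn G (insert u S) u = degIn G S u := by
  unfold degIn
  rw [Finset.filter_insert, if_neg (G.loopless.irrefl u)]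

lemma degIn_insert_of_ne {V : Type*} (G : SimpleGraph V) {S : Finset V} {u w : V}
    (hne : w ≠ u) (hu : u ∉ S) :
    degIn G (insert u S) w = degIn G S w + (if G.Adj w u then 1 else 0) := by
  unfold degIn
  rw [Finset.filter_insert]
  split_ifs with h
  · rw [Finset.card_insert_of_notMem (by simp [hu])]
  · omega

lemma degIn_comm_sum {V : Type*} (G : SimpleGraph V) (S : Finset V) (u : V) :
    degIn G S u = ∑ v ∈ S, (if G.Adj v u then 1 else 0) := by
  unfold degIn
  rw [Finset.card_filter]
  exact Finset.sum_congr rfl fun v _ => if_congr (G.adj_comm u v) rfl rfl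

lemma e2_insert {V : Type*} (G : SimpleGraph V) {S : Finset V} {u : V} (hu : u ∉ S) :
    e2 G (insert u S) = e2 G S + 2 * degIn G S u := by
  unfold e2
  rw [Finset.sum_insert hu, degIn_insert_self]
  have h : ∀ v ∈ S, degIn G (insert u S) v
      = degIn G S v + (if G.Adj v u then 1 else 0) :=
    fun v hv => degIn_insert_of_ne G (ne_of_mem_of_not_mem hv hu) hu
  rw [Finset.sum_congr rfl h, Finset.sum_add_distrib, ← degIn_comm_sum]
  ring

lemma degIn_erase_self {V : Type*} (G : SimpleGraph V) (S : Finset V) (v : V) :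
    degIn G (S.erase v) v = degIn G S v := by
  unfold degIn
  rw [Finset.filter_erase]
  exact congrArg Finset.card
    (Finset.erase_eq_of_notMem fun h => G.loopless.irrefl v (Finset.mem_filter.mp h).2)

/-- The key swap inequality from maximality of `e2` among sets of a given size. -/
lemma swap_bound {V : Type*} [Fintype V] (G : SimpleGraph V) {A : Finset V}
    (hmax : ∀ C : Finset V, C.card = A.card → e2 G C ≤ e2 G A)
    {v u : V} (hv : v ∈ A) (hu : u ∉ A) :
    degIn G A u ≤ degIn G A v + (if G.Adj u v then 1 else 0) := by
  set A' := A.erase v with hA'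
  have hvA' : v ∉ A' := Finset.notMem_erase v A
  have huA' : u ∉ A' := fun h => hu (Finset.mem_of_mem_erase h)
  have hins : insert v A' = A := Finset.insert_erase hv
  have h1 : e2 G A = e2 G A' + 2 * degIn G A v := by
    conv_lhs => rw [← hins]
    rw [e2_insert G hvA', degIn_erase_self]
  have h2 : e2 G (insert u A') = e2 G A' + 2 * degIn G A' u := e2_insert G huA'
  have hcard : (insert u A').card = A.card := by
    rw [Finset.card_insert_of_notMem huA', hA', Finset.card_erase_of_mem hv]
    have : 1 ≤ A.card := Finset.card_pos.mpr ⟨v, hv⟩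
    omega
  have h3 := hmax _ hcard
  rw [h2, h1] at h3
  have h4 : degIn G A' u ≤ degIn G A v := by omega
  have h5 : degIn G A u = degIn G A' u + (if G.Adj u v then 1 else 0) := by
    conv_lhs => rw [← hins]
    exact degIn_insert_of_ne G (fun h => hu (h ▸ hv)) hvA'
  rw [h5]
  exact Nat.add_le_add_right h4 _

lemma degIn_add_compl {V : Type*} [Fintype V] (G : SimpleGraph V) {d : ℕ}
    (hreg : G.IsRegularOfDegree d) (A : Finset V) (w : V) :
    degIn G A w + degIn G Aᶜ w = d := by
  have hdisj : Disjoint (A.filter fun u => G.Adj w u) (Aᶜ.filter fun u => G.Adj w u) :=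
    Finset.disjoint_filter_filter disjoint_compl_right
  have : degIn G A w + degIn G Aᶜ w = (Finset.univ.filter fun u => G.Adj w u).card := by
    unfold degIn
    rw [← Finset.card_union_of_disjoint hdisj, ← Finset.filter_union, Finset.union_compl]
  rw [this, ← SimpleGraph.neighborFinset_eq_filter]
  exact hreg w

lemma sum_deg_eq {V : Type*} [Fintype V] (G : SimpleGraph V) {d : ℕ}
    (hreg : G.IsRegularOfDegree d) :
    Fintype.card V * d = 2 * G.edgeFinset.card := by
  rw [← SimpleGraph.sum_degrees_eq_twice_card_edges]
  rw [Finset.sum_congr rfl fun v _ => hreg v, Finset.sum_const, smul_eq_mul,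
    Finset.card_univ]

lemma density_mul {V : Type*} [Fintype V] (G : SimpleGraph V) {d : ℕ}
    (hreg : G.IsRegularOfDegree d) (h2 : 2 ≤ Fintype.card V) :
    density G * ((Fintype.card V : ℝ) - 1) = d := by
  have hE : ((Fintype.card V : ℝ)) * d = 2 * G.edgeFinset.card := by
    exact_mod_cast sum_deg_eq G hreg
  have hn0 : (Fintype.card V : ℝ) ≠ 0 := by positivity
  have hn1 : (Fintype.card V : ℝ) - 1 ≠ 0 := by
    have : (2 : ℝ) ≤ (Fintype.card V : ℝ) := by exact_mod_cast h2
    linarith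
  have hden : ((Fintype.card V : ℝ) * ((Fintype.card V : ℝ) - 1) / 2) ≠ 0 := by
    apply div_ne_zero (mul_ne_zero hn0 hn1)
    norm_num
  unfold density
  rw [Nat.cast_choose_two, div_mul_eq_mul_div, div_eq_iff hden]
  linear_combination (-((Fintype.card V : ℝ) - 1) / 2) * hE

/-- every `d`-regular graph on `n` vertices has a full subgraph on
`⌊n/2⌋` or `⌊n/2⌋ + 1` vertices. -/
theorem stmt11 {V : Type*} [Fintype V] (G : SimpleGraph V) (d : ℕ)
    (hreg : G.IsRegularOfDegree d) :
    ∃ S : Finset V,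
      (S.card = Fintype.card V / 2 ∨ S.card = Fintype.card V / 2 + 1) ∧
      IsFull G (density G) S := by
  set n := Fintype.card V with hn
  set m := n / 2 with hm
  set p := density G with hp
  have hp0 : 0 ≤ p := by
    rw [hp]; unfold density; positivity
  -- choose A of size m maximizing e2
  have hne : (Finset.univ.powersetCard m : Finset (Finset V)).Nonempty := by
    rw [Finset.powersetCard_nonempty, Finset.card_univ]
    omega
  obtain ⟨A, hAmem, hAmax⟩ := Finset.exists_max_image _ (e2 G) hne
  have hAcard : A.card = m := Finset.mem_powersetCard_univ.mp hAmem
  have hmax : ∀ C : Finset V, C.card = A.card → e2 G C ≤ e2 G A := by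
    intro C hC
    exact hAmax C (Finset.mem_powersetCard_univ.mpr (hC.trans hAcard))
  have hswap : ∀ v ∈ A, ∀ u ∉ A,
      degIn G A u ≤ degIn G A v + (if G.Adj u v then 1 else 0) :=
    fun v hv u hu => swap_bound G hmax hv hu
  have hdegc : ∀ w, degIn G A w + degIn G Aᶜ w = d := degIn_add_compl G hreg A
  by_cases hfull : IsFull G p A
  · exact ⟨A, Or.inl hAcard, hfull⟩
  rw [IsFull] at hfull; push_neg at hfull
  obtain ⟨v₀, hv₀A, hv₀⟩ := hfull
  rw [hAcard] at hv₀
  have hm1 : 1 ≤ m := by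
    have h := Finset.card_pos.mpr ⟨v₀, hv₀A⟩
    omega
  have hn2 : 2 ≤ n := by omega
  have hpd : p * ((n : ℝ) - 1) = d := density_mul G hreg hn2
  rcases Nat.even_or_odd n with he | ho
  · -- n even: n = 2m, use S = insert v₀ Aᶜ
    have hnm : n = 2 * m := by
      obtain ⟨k, hk⟩ := he; omega
    have hv₀c : v₀ ∉ Aᶜ := by simp [hv₀A]
    have hScard : (insert v₀ Aᶜ).card = m + 1 := by
      rw [Finset.card_insert_of_notMem hv₀c, Finset.card_compl, hAcard, ← hn]
      omega
    refine ⟨insert v₀ Aᶜ, Or.inr hScard, ?_⟩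
    intro w hw
    rw [hScard]
    have hNat : d ≤ degIn G (insert v₀ Aᶜ) w + degIn G A v₀ := by
      rcases Finset.mem_insert.mp hw with rfl | hwB
      · rw [degIn_insert_self]
        have := hdegc w
        omega
      · have hwv : w ≠ v₀ := ne_of_mem_of_not_mem hwB hv₀c
        rw [degIn_insert_of_ne G hwv hv₀c]
        have h1 := hdegc w
        have h2 := hswap v₀ hv₀A w (Finset.mem_compl.mp hwB)
        split_ifs at h2 ⊢ <;> omega
    have hcast : (d : ℝ) ≤ (degIn G (insert v₀ Aᶜ) w : ℝ) + (degIn G A v₀ : ℝ) := by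
      exact_mod_cast hNat
    have h5 : p * (m : ℝ) + p * ((m : ℝ) - 1) = d := by
      rw [← hpd]
      have : (n : ℝ) = 2 * (m : ℝ) := by exact_mod_cast hnm
      rw [this]; ring
    push_cast
    linarith [hv₀, hcast, h5]
  · -- n odd: n = 2m+1, d is even
    have hnm : n = 2 * m + 1 := by
      rcases ho with ⟨k, hk⟩; omega
    have hdeven : Even d := by
      have h := sum_deg_eq G hreg
      rw [← hn] at h
      have : Even (n * d) := ⟨G.edgeFinset.card, by omega⟩
      rcases Nat.even_mul.mp this with h' | h'
      · exact absurd h' (Nat.not_even_iff_odd.mpr ho)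
      · exact h'
    obtain ⟨t, ht⟩ := hdeven
    have hBcard : (Aᶜ : Finset V).card = m + 1 := by
      rw [Finset.card_compl, hAcard, ← hn]
      omega
    by_cases hB : IsFull G p Aᶜ
    · exact ⟨Aᶜ, Or.inr hBcard, hB⟩
    rw [IsFull] at hB; push_neg at hB
    obtain ⟨u₀, hu₀B, hu₀⟩ := hB
    rw [hBcard] at hu₀
    have hu₀A : u₀ ∉ A := Finset.mem_compl.mp hu₀B
    have h5 : p * (m : ℝ) + p * (m : ℝ) = d := by
      rw [← hpd]
      have : (n : ℝ) = 2 * (m : ℝ) + 1 := by exact_mod_cast hnm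
      rw [this]; ring
    have hq : 2 * degIn G Aᶜ u₀ < d := by
      have hr : (2 * degIn G Aᶜ u₀ : ℝ) < d := by
        push_cast at hu₀ ⊢
        linarith [hu₀, h5]
      exact_mod_cast hr
    have hq2 : 2 * degIn G Aᶜ u₀ + 2 ≤ d := by omega
    refine ⟨A, Or.inl hAcard, ?_⟩
    intro v hv
    rw [hAcard]
    have hsw := hswap v hv u₀ hu₀A
    have h1 := hdegc v
    have h2 := hdegc u₀
    have hNat : d ≤ 2 * degIn G A v := by
      split_ifs at hsw <;> omega
    have hcast : (d : ℝ) ≤ 2 * (degIn G A v : ℝ) := by exact_mod_cast hNat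
    push_cast
    linarith [hcast, h5, hp0]
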